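/- Let A be a pca and ∼ an equivalence relation on A. Then ∼ is algebraic (a congruence for application) if and only if A is left-algebraic, i.e., for all f, g ∈ A, f ∼ g implies z·f ∼ z·g (in the extended sense) for all z ∈ A. -/
import Mathlib


/-- A partial combinatory algebra: a partial binary application together with
combinators `k` and `s` satisfying the usual laws. -/
structure PCA (A : Type) where
  app : A → A → Part A
  k : A
  s : A
  k_def : ∀ a : A, (app k a).Dom
  k_eq : ∀ a b : A, (app k a).bind (fun u => app u b) = Part.some a
  s_def : ∀ a : A, (app s a).Dom
  s_def2 : ∀ a b : A, ((app s a).bind fun u => app u b).Dom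
  s_eq : ∀ a b c : A,
    (((app s a).bind fun u => app u b).bind fun u => app u c) =
      (app a c).bind fun u => (app b c).bind fun v => app u v

/-- Extension of a relation on `A` to partial values: either both are
undefined, or both are defined with related values. -/
def PartRel {A : Type} (r : A → A → Prop) (x y : Part A) : Prop :=
  (¬ x.Dom ∧ ¬ y.Dom) ∨ (∃ a ∈ x, ∃ b ∈ y, r a b)

theorem partRel_trans {A : Type} {r : A → A → Prop} (hr : Transitive r)
    {x y z : Part A} (h1 : PartRel r x y) (h2 : PartRel r y z) :
    PartRel r x z := by
  rcases h1 with ⟨hx, hy⟩ | ⟨a, ha, b, hb, hab⟩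
  · rcases h2 with ⟨hy', hz⟩ | ⟨b, hb, c, hc, hbc⟩
    · exact Or.inl ⟨hx, hz⟩
    · exact absurd hb.fst hy
  · rcases h2 with ⟨hy', hz⟩ | ⟨b', hb', c, hc, hbc⟩
    · exact absurd hb.fst hy'
    · exact Or.inr ⟨a, ha, c, hc, hr hab (Part.mem_unique hb hb' ▸ hbc)⟩

/-- `∼` is algebraic (a congruence for application) iff `A` is
left-algebraic: `f ∼ g` implies `z·f ∼ z·g` (extended sense) for all `z`. -/
theorem algebraic_iff_left_algebraic {A : Type} (P : PCA A) (r : A → A → Prop)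
    (hr : Equivalence r) :
    (∀ a a' b b' : A, r a a' → r b b' →
        PartRel r (P.app a b) (P.app a' b')) ↔
    (∀ f g : A, r f g → ∀ z : A, PartRel r (P.app z f) (P.app z g)) := by
  constructor
  · intro h f g hfg z
    exact h z z f g (hr.refl z) hfg
  · intro h a a' b b' haa' hbb'
    -- k·x applied to anything gives x
    have kapp : ∀ (x : A) (y : A),
        P.app ((P.app P.k x).get (P.k_def x)) y = Part.some x := by
      intro x y
      have := P.k_eq x y
      rwa [(P.k_def x).bind] at this
    -- i := s·k·k is an identity
    set i : A := ((P.app P.s P.k).bind fun u => P.app u P.k).get (P.s_def2 P.k P.k)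
      with hi
    have sapp : ∀ (x y z : A),
        P.app (((P.app P.s x).bind fun u => P.app u y).get (P.s_def2 x y)) z =
          (P.app x z).bind fun u => (P.app y z).bind fun v => P.app u v := by
      intro x y z
      have := P.s_eq x y z
      rwa [(P.s_def2 x y).bind] at this
    have iapp : ∀ x : A, P.app i x = Part.some x := by
      intro x
      rw [hi, sapp]
      rw [(P.k_def x).bind]
      simp only [kapp]
      rw [(P.k_def x).bind]
    -- t b := s·i·(k·b), so that (t b)·a = a·b
    have key : ∀ x y : A,
        P.app (((P.app P.s i).bind fun u =>
          P.app u ((P.app P.k y).get (P.k_def y))).get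
            (P.s_def2 i ((P.app P.k y).get (P.k_def y)))) x = P.app x y := by
      intro x y
      rw [sapp, iapp, Part.bind_some, kapp, Part.bind_some]
    -- a·b ∼ a'·b via left-algebraicity applied to t b
    have h1 : PartRel r (P.app a b) (P.app a' b) := by
      have := h a a' haa'
        (((P.app P.s i).bind fun u =>
          P.app u ((P.app P.k b).get (P.k_def b))).get
            (P.s_def2 i ((P.app P.k b).get (P.k_def b))))
      rwa [key, key] at this
    have h2 : PartRel r (P.app a' b) (P.app a' b') := h b b' hbb' a'
    exact partRel_trans (r := r) (fun _ _ _ p q => hr.trans p q) h1 h2
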